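/- An isolated hidden vertex in a tree forces at least 6 leaves: if T is a finite tree in which every vertex has degree 1 or ≥ 3, and v is an internal vertex such that no neighbor of v is a leaf and no neighbor of v is hidden, then T has at least 6 leaves. -/

import Mathlib

open Finset

/-- The degree of a vertex, as the number of its neighbors. -/
noncomputable def degC {V : Type*} (G : SimpleGraph V) (v : V) : ℕ :=
  {w | G.Adj v w}.ncard

/-- A hidden vertex: an internal (non-leaf) vertex none of whose neighbors
is a leaf. -/
def IsHidden {V : Type*} (G : SimpleGraph V) (v : V) : Prop :=
  degC G v ≠ 1 ∧ ∀ w : V, G.Adj v w → degC G w ≠ 1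

lemma degC_eq_degree {V : Type*} [Fintype V] [DecidableEq V] (G : SimpleGraph V)
    [DecidableRel G.Adj] (v : V) : degC G v = G.degree v := by
  simp [degC, SimpleGraph.degree, SimpleGraph.neighborFinset, SimpleGraph.neighborSet,
    Set.ncard_eq_toFinset_card']
  congr 1; ext; simp only [mem_filter, mem_univ, true_and]
  exact (Set.mem_toFinset (s := {w | G.Adj v w})).symm

lemma no_triangle {V : Type*} {G : SimpleGraph V} (hT : G.IsTree) {a b c : V}
    (hab : G.Adj a b) (hbc : G.Adj b c) (hac : G.Adj a c) : False := by
  have h1 : (SimpleGraph.Walk.cons hac SimpleGraph.Walk.nil).IsPath := by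
    simp [hac.ne]
  have h2 : (SimpleGraph.Walk.cons hab (SimpleGraph.Walk.cons hbc SimpleGraph.Walk.nil)).IsPath := by
    simp [hab.ne, hbc.ne, hac.ne]
  have := (hT.existsUnique_path a c).unique h1 h2
  have := congrArg SimpleGraph.Walk.length this
  simp at this

lemma no_square {V : Type*} {G : SimpleGraph V} (hT : G.IsTree) {a b c d : V}
    (hbd : b ≠ d) (hac : a ≠ c) (hab : G.Adj a b) (hbc : G.Adj b c) (hcd : G.Adj c d) (had : G.Adj a d) :
    False := by
  have h1 : (SimpleGraph.Walk.cons hab.symm (SimpleGraph.Walk.cons had SimpleGraph.Walk.nil)).IsPath := by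
    simp [hab.ne', had.ne, hbd]
  have h2 : (SimpleGraph.Walk.cons hbc (SimpleGraph.Walk.cons hcd SimpleGraph.Walk.nil)).IsPath := by
    simp [hbc.ne, hcd.ne, hbd]
  have heq := (hT.existsUnique_path b d).unique h1 h2
  have := congrArg SimpleGraph.Walk.support heq
  simp at this
  exact hac this

theorem isolated_hidden_vertex_six_leaves {V : Type*} [Fintype V]
    (G : SimpleGraph V) (hT : G.IsTree)
    (hdeg : ∀ v : V, degC G v = 1 ∨ 3 ≤ degC G v)
    (v : V) (hv : degC G v ≠ 1)
    (hnoleaf : ∀ w : V, G.Adj v w → degC G w ≠ 1)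
    (hnohidden : ∀ w : V, G.Adj v w → ¬ IsHidden G w) :
    6 ≤ {u : V | degC G u = 1}.ncard := by
  classical
  have hdC : ∀ u : V, degC G u = G.degree u := degC_eq_degree G
  set L : Finset V := univ.filter (fun u => G.degree u = 1) with hLdef
  have hL : {u : V | degC G u = 1}.ncard = L.card := by
    simp [hdC, Set.ncard_eq_toFinset_card', hLdef]
  rw [hL]
  -- degrees of v and its neighbors are ≥ 3
  have hdv : 3 ≤ G.degree v := by
    have := hdeg v; rw [hdC v] at this hv; omega
  have hdw : ∀ w : V, G.Adj v w → 3 ≤ G.degree w := by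
    intro w hw
    have h1 := hnoleaf w hw
    have := hdeg w; rw [hdC w] at this h1; omega
  -- the set of 10 distinct vertices
  set N : Finset V := G.neighborFinset v with hNdef
  set f : V → Finset V := fun w => (G.neighborFinset w).erase v with hfdef
  set B : Finset V := N.biUnion f with hBdef
  have hmemN : ∀ w, w ∈ N ↔ G.Adj v w := fun w => G.mem_neighborFinset v w
  have hNcard : 3 ≤ N.card := hdv
  have hfcard : ∀ w ∈ N, 2 ≤ (f w).card := by
    intro w hw
    have hadj := (hmemN w).mp hw
    have hvmem : v ∈ G.neighborFinset w := (G.mem_neighborFinset w v).mpr hadj.symm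
    have := hdw w hadj
    rw [hfdef]
    simp only [Finset.card_erase_of_mem hvmem]
    have hh : G.degree w = (G.neighborFinset w).card := rfl
    omega
  have hdisj : (N : Set V).PairwiseDisjoint f := by
    intro w hw w' hw' hne
    simp only [Function.onFun]
    rw [Finset.disjoint_left]
    intro u hu hu'
    simp only [hfdef, Finset.mem_erase, SimpleGraph.mem_neighborFinset] at hu hu'
    exact no_square hT hne (fun h => hu.1 h.symm) ((hmemN w).mp hw) hu.2
      hu'.2.symm ((hmemN w').mp hw')
  have hBcard : 6 ≤ B.card := by
    rw [hBdef, Finset.card_biUnion hdisj]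
    calc 6 = 2 * 3 := rfl
    _ ≤ 2 * N.card := by omega
    _ = ∑ _w ∈ N, 2 := by rw [Finset.sum_const, smul_eq_mul, mul_comm]
    _ ≤ ∑ w ∈ N, (f w).card := Finset.sum_le_sum hfcard
  have hNB : Disjoint N B := by
    rw [Finset.disjoint_left]
    intro u hu hu'
    rw [hBdef, Finset.mem_biUnion] at hu'
    obtain ⟨w, hw, huw⟩ := hu'
    simp only [hfdef, Finset.mem_erase, SimpleGraph.mem_neighborFinset] at huw
    exact no_triangle hT ((hmemN w).mp hw) huw.2 ((hmemN u).mp hu)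
  have hvN : v ∉ N := by simp [hNdef]
  have hvB : v ∉ B := by
    rw [hBdef, Finset.mem_biUnion]
    rintro ⟨w, hw, huw⟩
    simp [hfdef] at huw
  have hbig : 10 ≤ Fintype.card V := by
    have h1 : (insert v (N ∪ B)).card ≤ Fintype.card V := Finset.card_le_univ _
    rw [Finset.card_insert_of_notMem (by simp [hvN, hvB]),
      Finset.card_union_of_disjoint hNB] at h1
    omega
  -- counting via handshake
  have hsum : ∑ u, G.degree u = 2 * G.edgeFinset.card :=
    SimpleGraph.sum_degrees_eq_twice_card_edges G
  have hedge : G.edgeFinset.card + 1 = Fintype.card V := hT.card_edgeFinset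
  have hsplit : ∑ u ∈ L, G.degree u
      + ∑ u ∈ univ.filter (fun u => ¬ G.degree u = 1), G.degree u = ∑ u, G.degree u :=
    Finset.sum_filter_add_sum_filter_not univ _ _
  have h1 : ∑ u ∈ L, G.degree u = L.card := by
    rw [Finset.sum_congr rfl (fun u hu => (Finset.mem_filter.mp hu).2)]
    simp only [Finset.sum_const, smul_eq_mul, mul_one]
    convert rfl
  have h2 : 3 * (univ.filter (fun u => ¬ G.degree u = 1)).card
      ≤ ∑ u ∈ univ.filter (fun u => ¬ G.degree u = 1), G.degree u := by
    rw [mul_comm, ← smul_eq_mul]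
    refine Finset.card_nsmul_le_sum _ _ _ (fun u hu => ?_)
    have := hdeg u
    rw [hdC u] at this
    have := (Finset.mem_filter.mp hu).2
    omega
  have h3 : L.card + (univ.filter (fun u => ¬ G.degree u = 1)).card = Fintype.card V := by
    rw [hLdef, Finset.card_filter_add_card_filter_not]
    exact Finset.card_univ
  omega
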